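/- Let p₁, p₂ be probability densities on ℝ with CDFs F₁, F₂, and let c : [0,1]² → [0,∞) be a copula density (nonnegative, with ∫₀¹ c(u, v) dv = 1 for a.e. u and ∫₀¹ c(u, v) du = 1 for a.e. v). Define the partially wrapped joint density p^{PW}(φ, y) = ∑_{k∈ℤ} c(F₁(φ + 2πk), F₂(y)) · p₁(φ + 2πk) · p₂(y) for (φ, y) ∈ [0, 2π) × ℝ. Then marginalizing over φ ∈ [0, 2π) yields p₂: ∫₀^{2π} p^{PW}(φ, y) dφ = p₂(y) for a.e. y. -/

import Mathlib

open MeasureTheory Real Filter Topology ENNReal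

namespace PWAux

lemma integrable_of_density {p : ℝ → ℝ} (hmeas : Measurable p) (hnn : ∀ x, 0 ≤ p x)
    (hint : ∫⁻ x, ENNReal.ofReal (p x) = 1) : Integrable p := by
  refine ⟨hmeas.aestronglyMeasurable, ?_⟩
  rw [hasFiniteIntegral_iff_ofReal (Filter.Eventually.of_forall hnn), hint]
  exact ENNReal.one_lt_top

lemma ofReal_cdf {p F : ℝ → ℝ} (hmeas : Measurable p) (hnn : ∀ x, 0 ≤ p x)
    (hint : ∫⁻ x, ENNReal.ofReal (p x) = 1)
    (hF : ∀ x, F x = ∫ t in Set.Iic x, p t) (x : ℝ) :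
    ENNReal.ofReal (F x) = (volume.withDensity fun t => ENNReal.ofReal (p t)) (Set.Iic x) := by
  rw [withDensity_apply _ measurableSet_Iic]
  have hle : ∫⁻ t in Set.Iic x, ENNReal.ofReal (p t) ≤ 1 := by
    rw [← hint]; exact setLIntegral_le_lintegral _ _
  have hFx : F x = (∫⁻ t in Set.Iic x, ENNReal.ofReal (p t)).toReal := by
    rw [hF x]
    exact integral_eq_lintegral_of_nonneg_ae (Filter.Eventually.of_forall hnn)
      hmeas.aestronglyMeasurable.restrict
  rw [hFx, ENNReal.ofReal_toReal (hle.trans_lt ENNReal.one_lt_top).ne]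

lemma cdf_map {p F : ℝ → ℝ} (hmeas : Measurable p) (hnn : ∀ x, 0 ≤ p x)
    (hint : ∫⁻ x, ENNReal.ofReal (p x) = 1)
    (hF : ∀ x, F x = ∫ t in Set.Iic x, p t) :
    Monotone F ∧ Measure.map F (volume.withDensity fun t => ENNReal.ofReal (p t))
      = volume.restrict (Set.Ioo (0:ℝ) 1) := by
  set μ : Measure ℝ := volume.withDensity fun t => ENNReal.ofReal (p t) with hμdef
  have hIic : ∀ x, ENNReal.ofReal (F x) = μ (Set.Iic x) := ofReal_cdf hmeas hnn hint hF
  have hpint : Integrable p := integrable_of_density hmeas hnn hint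
  haveI hprob : IsProbabilityMeasure μ := ⟨by
    rw [hμdef, withDensity_apply _ MeasurableSet.univ, Measure.restrict_univ]; exact hint⟩
  have hIicfin : ∀ x, μ (Set.Iic x) ≠ ⊤ := fun x => (measure_lt_top μ _).ne
  have hFnn : ∀ x, 0 ≤ F x := fun x => by
    rw [hF x]; exact setIntegral_nonneg measurableSet_Iic fun t _ => hnn t
  have hFtoReal : ∀ x, F x = (μ (Set.Iic x)).toReal := fun x => by
    rw [← hIic x, ENNReal.toReal_ofReal (hFnn x)]
  have hFmono : Monotone F := fun a b hab => by
    rw [hFtoReal a, hFtoReal b]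
    exact ENNReal.toReal_mono (hIicfin b) (measure_mono (Set.Iic_subset_Iic.2 hab))
  have hFle1 : ∀ x, F x ≤ 1 := fun x => by
    rw [hFtoReal x]
    simpa using ENNReal.toReal_mono (by simp) (prob_le_one (μ := μ) (s := Set.Iic x))
  have hFcont : Continuous F := by
    have hc : Continuous fun x => ∫ t in (0:ℝ)..x, p t := hpint.continuous_primitive 0
    have heq : ∀ x, F x = F 0 + ∫ t in (0:ℝ)..x, p t := by
      intro x
      rcases le_total 0 x with h | h
      · rw [intervalIntegral.integral_of_le h, hF x, hF 0,
          ← Set.Iic_union_Ioc_eq_Iic h,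
          setIntegral_union (Set.Iic_disjoint_Ioc le_rfl) measurableSet_Ioc
            hpint.integrableOn hpint.integrableOn]
      · rw [intervalIntegral.integral_symm, intervalIntegral.integral_of_le h, hF x, hF 0,
          ← Set.Iic_union_Ioc_eq_Iic h,
          setIntegral_union (Set.Iic_disjoint_Ioc le_rfl) measurableSet_Ioc
            hpint.integrableOn hpint.integrableOn]
        ring
    have hFeq : F = fun x => F 0 + ∫ t in (0:ℝ)..x, p t := funext heq
    rw [hFeq]
    exact continuous_const.add hc
  have hFmeas : Measurable F := hFmono.measurable
  refine ⟨hFmono, ?_⟩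
  haveI : IsProbabilityMeasure (Measure.map F μ) :=
    Measure.isProbabilityMeasure_map hFmeas.aemeasurable
  refine Measure.ext_of_Iic _ _ fun u => ?_
  rw [Measure.map_apply hFmeas measurableSet_Iic,
      Measure.restrict_apply' measurableSet_Ioo]
  rcases le_or_gt 1 u with hu1 | hu1
  · have hS : F ⁻¹' Set.Iic u = Set.univ :=
      Set.eq_univ_of_forall fun t => (hFle1 t).trans hu1
    have hI : Set.Iic u ∩ Set.Ioo (0:ℝ) 1 = Set.Ioo 0 1 :=
      Set.inter_eq_self_of_subset_right fun x hx => hx.2.le.trans hu1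
    rw [hS, hI, measure_univ, Real.volume_Ioo]
    norm_num
  · have htop : Tendsto F atTop (𝓝 1) := by
      have h1 : Tendsto (fun x => μ (Set.Iic x)) atTop (𝓝 (μ Set.univ)) :=
        tendsto_measure_Iic_atTop μ
      rw [measure_univ] at h1
      have h2 := (ENNReal.tendsto_toReal (a := 1) (by simp)).comp h1
      have h2' : Tendsto (fun x => (μ (Set.Iic x)).toReal) atTop (𝓝 1) := by
        simpa [Function.comp_def] using h2
      have h3 : (fun x => (μ (Set.Iic x)).toReal) = F := funext fun x => (hFtoReal x).symm
      rwa [h3] at h2'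
    obtain ⟨b, hb⟩ : ∃ b, u < F b := (htop.eventually (eventually_gt_nhds hu1)).exists
    by_cases hne : (F ⁻¹' Set.Iic u).Nonempty
    · have hbdd : BddAbove (F ⁻¹' Set.Iic u) := ⟨b, fun t ht =>
        le_of_not_gt fun hbt => absurd ((hFmono hbt.le).trans ht) (not_le.2 hb)⟩
      have hSclosed : IsClosed (F ⁻¹' Set.Iic u) := isClosed_Iic.preimage hFcont
      set x₀ := sSup (F ⁻¹' Set.Iic u) with hx₀
      have hx₀mem : x₀ ∈ F ⁻¹' Set.Iic u := hSclosed.csSup_mem hne hbdd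
      have hSeq : F ⁻¹' Set.Iic u = Set.Iic x₀ :=
        Set.Subset.antisymm (fun t ht => le_csSup hbdd ht)
          (fun t ht => le_trans (hFmono ht) hx₀mem)
      have hFx₀ : F x₀ = u := by
        refine le_antisymm hx₀mem (le_of_not_gt fun hlt => ?_)
        have hev : ∀ᶠ t in 𝓝 x₀, F t < u :=
          (hFcont.continuousAt (x := x₀)).eventually_lt continuousAt_const hlt
        obtain ⟨t, htu, htI⟩ :=
          ((hev.filter_mono nhdsWithin_le_nhds).and
            (eventually_mem_nhdsWithin (s := Set.Ioi x₀))).exists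
        exact absurd (le_csSup hbdd htu.le) (not_le.2 htI)
      have hu0 : 0 ≤ u := hFx₀ ▸ hFnn x₀
      rw [hSeq, ← hIic x₀, hFx₀]
      have hI : Set.Iic u ∩ Set.Ioo (0:ℝ) 1 = Set.Ioc 0 u := by
        ext x
        simp only [Set.mem_inter_iff, Set.mem_Iic, Set.mem_Ioo, Set.mem_Ioc]
        constructor
        · rintro ⟨h1, h2, _⟩; exact ⟨h2, h1⟩
        · rintro ⟨h1, h2⟩; exact ⟨h2, h1, lt_of_le_of_lt h2 hu1⟩
      rw [hI, Real.volume_Ioc, sub_zero]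
    · rw [Set.not_nonempty_iff_eq_empty] at hne
      have hu0 : u ≤ 0 := by
        by_contra h
        push_neg at h
        have hbot : Tendsto (μ ∘ fun n : ℕ => Set.Iic (-(n:ℝ))) atTop
            (𝓝 (μ (⋂ n : ℕ, Set.Iic (-(n:ℝ))))) :=
          tendsto_measure_iInter_atTop (fun n => measurableSet_Iic.nullMeasurableSet)
            (fun m n hmn => Set.Iic_subset_Iic.2 (neg_le_neg (by exact_mod_cast hmn)))
            ⟨0, (measure_lt_top μ _).ne⟩
        have hemp : (⋂ n : ℕ, Set.Iic (-(n:ℝ))) = ∅ := by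
          ext x
          simp only [Set.mem_iInter, Set.mem_Iic, Set.mem_empty_iff_false, iff_false, not_forall,
            not_le]
          obtain ⟨n, hn⟩ := exists_nat_gt (-x)
          exact ⟨n, by linarith⟩
        rw [hemp, measure_empty] at hbot
        obtain ⟨n, hn⟩ :=
          (hbot.eventually (eventually_lt_nhds (ENNReal.ofReal_pos.2 h))).exists
        simp only [Function.comp] at hn
        rw [← hIic] at hn
        have hFn : F (-(n:ℝ)) ≤ u := by
          rcases le_or_gt (F (-(n:ℝ))) u with h' | h'
          · exact h'
          · exact absurd hn (not_lt.2 (ENNReal.ofReal_le_ofReal h'.le))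
        have hmem : (-(n:ℝ)) ∈ F ⁻¹' Set.Iic u := hFn
        rw [hne] at hmem
        exact hmem
      have hI : Set.Iic u ∩ Set.Ioo (0:ℝ) 1 = ∅ := by
        ext x
        simp only [Set.mem_inter_iff, Set.mem_Iic, Set.mem_Ioo, Set.mem_empty_iff_false,
          iff_false, not_and]
        intro h1 h2
        intro
        linarith
      rw [hne, hI, measure_empty, measure_empty]

lemma lintegral_comp_cdf {p F : ℝ → ℝ} (hmeas : Measurable p) (hFmeas : Measurable F)
    (hmap : Measure.map F (volume.withDensity fun t => ENNReal.ofReal (p t))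
      = volume.restrict (Set.Ioo (0:ℝ) 1))
    (g : ℝ → ℝ≥0∞) (hg : Measurable g) :
    ∫⁻ t, g (F t) * ENNReal.ofReal (p t) = ∫⁻ u in Set.Ioo (0:ℝ) 1, g u := by
  have h1 : ∫⁻ t, g (F t) * ENNReal.ofReal (p t)
      = ∫⁻ t, g (F t) ∂(volume.withDensity fun t => ENNReal.ofReal (p t)) := by
    rw [lintegral_withDensity_eq_lintegral_mul volume hmeas.ennreal_ofReal
      (show Measurable fun t => g (F t) from hg.comp hFmeas)]
    exact lintegral_congr fun t => mul_comm _ _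
  rw [h1, ← lintegral_map hg hFmeas, hmap]

lemma lintegral_Ico_wrap (T : ℝ) (hT : 0 < T) (f : ℝ → ℝ≥0∞) (hf : Measurable f) :
    ∫⁻ φ in Set.Ico (0:ℝ) T, ∑' k : ℤ, f (φ + T * k) = ∫⁻ x, f x := by
  rw [lintegral_tsum (f := fun (k : ℤ) (φ : ℝ) => f (φ + T * k)) fun k =>
    (show Measurable fun φ : ℝ => f (φ + T * k) from hf.comp (measurable_add_const _)).aemeasurable]
  have h1 : ∀ k : ℤ, ∫⁻ φ in Set.Ico (0:ℝ) T, f (φ + T * k)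
      = ∫⁻ x in Set.Ico ((k : ℤ) • T) ((k + 1 : ℤ) • T), f x := by
    intro k
    have hmp := (measurePreserving_add_right volume (T * k)).setLIntegral_comp_emb
      (Homeomorph.addRight (T * (k:ℝ))).measurableEmbedding f (Set.Ico 0 T)
    rw [hmp]
    congr 1
    rw [Set.image_add_const_Ico]
    congr 1 <;> simp [zsmul_eq_mul] <;> ring
  simp_rw [h1]
  have hdisj : Pairwise (Function.onFun Disjoint
      fun k : ℤ => Set.Ico ((k : ℤ) • T) ((k + 1 : ℤ) • T)) := by
    intro i j hij
    simp only [Function.onFun, zsmul_eq_mul]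
    apply Set.disjoint_left.2
    intro x hxi hxj
    apply hij
    have h1 : (i : ℝ) < (j : ℝ) + 1 := by
      have hx := lt_of_le_of_lt hxi.1 hxj.2
      push_cast at hx
      exact (mul_lt_mul_iff_left₀ hT).1 hx
    have h2 : (j : ℝ) < (i : ℝ) + 1 := by
      have hx := lt_of_le_of_lt hxj.1 hxi.2
      push_cast at hx
      exact (mul_lt_mul_iff_left₀ hT).1 hx
    have h1' : i ≤ j := by exact_mod_cast Int.lt_add_one_iff.1 (by exact_mod_cast h1)
    have h2' : j ≤ i := by exact_mod_cast Int.lt_add_one_iff.1 (by exact_mod_cast h2)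
    omega
  rw [← lintegral_iUnion (fun k : ℤ => measurableSet_Ico) hdisj f,
    iUnion_Ico_zsmul hT, Measure.restrict_univ]

end PWAux

/-- Marginalizing the partially wrapped joint density
`p^{PW}(φ, y) = ∑_{k∈ℤ} c(F₁(φ+2πk), F₂(y)) p₁(φ+2πk) p₂(y)`
over the circular component `φ ∈ [0, 2π)` yields the linear margin `p₂`. -/
theorem pw_copula_marginal_linear
    (p₁ p₂ : ℝ → ℝ) (h₁meas : Measurable p₁) (h₂meas : Measurable p₂)
    (h₁nn : ∀ x, 0 ≤ p₁ x) (h₂nn : ∀ x, 0 ≤ p₂ x)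
    (h₁int : ∫⁻ x, ENNReal.ofReal (p₁ x) = 1)
    (h₂int : ∫⁻ x, ENNReal.ofReal (p₂ x) = 1)
    (F₁ F₂ : ℝ → ℝ)
    (hF₁ : ∀ x, F₁ x = ∫ t in Set.Iic x, p₁ t)
    (hF₂ : ∀ x, F₂ x = ∫ t in Set.Iic x, p₂ t)
    (c : ℝ → ℝ → ℝ) (hcmeas : Measurable (Function.uncurry c))
    (hcnn : ∀ u v, 0 ≤ c u v)
    (hc₁ : ∀ᵐ u ∂(volume.restrict (Set.Ioo (0:ℝ) 1)),
      ∫⁻ v in Set.Ioo (0:ℝ) 1, ENNReal.ofReal (c u v) = 1)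
    (hc₂ : ∀ᵐ v ∂(volume.restrict (Set.Ioo (0:ℝ) 1)),
      ∫⁻ u in Set.Ioo (0:ℝ) 1, ENNReal.ofReal (c u v) = 1) :
    ∀ᵐ y : ℝ,
      ∫⁻ φ in Set.Ico (0 : ℝ) (2 * π),
        (∑' k : ℤ, ENNReal.ofReal
          (c (F₁ (φ + 2 * π * k)) (F₂ y) * p₁ (φ + 2 * π * k) * p₂ y)) =
        ENNReal.ofReal (p₂ y) := by
  obtain ⟨hF₁mono, hmap₁⟩ := PWAux.cdf_map h₁meas h₁nn h₁int hF₁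
  obtain ⟨hF₂mono, hmap₂⟩ := PWAux.cdf_map h₂meas h₂nn h₂int hF₂
  have hF₁meas : Measurable F₁ := hF₁mono.measurable
  have hF₂meas : Measurable F₂ := hF₂mono.measurable
  -- bad set of v's
  rw [MeasureTheory.ae_iff] at hc₂
  set Bad : Set ℝ :=
    {v | ¬ ∫⁻ u in Set.Ioo (0:ℝ) 1, ENNReal.ofReal (c u v) = 1} with hBadDef
  set N : Set ℝ := toMeasurable (volume.restrict (Set.Ioo (0:ℝ) 1)) Bad with hNdef
  have hNmeas : MeasurableSet N := measurableSet_toMeasurable _ _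
  have hNsub : Bad ⊆ N := subset_toMeasurable _ _
  have hN0 : volume (N ∩ Set.Ioo (0:ℝ) 1) = 0 := by
    have h := measure_toMeasurable (μ := volume.restrict (Set.Ioo (0:ℝ) 1)) Bad
    rw [hc₂] at h
    rwa [Measure.restrict_apply hNmeas] at h
  set M : Set ℝ := (N ∩ Set.Ioo (0:ℝ) 1) ∪ (Set.Ioo (0:ℝ) 1)ᶜ with hMdef
  have hMmeas : MeasurableSet M :=
    (hNmeas.inter measurableSet_Ioo).union measurableSet_Ioo.compl
  have hμ2M : (volume.withDensity fun x => ENNReal.ofReal (p₂ x)) (F₂ ⁻¹' M) = 0 := by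
    rw [← Measure.map_apply hF₂meas hMmeas, hmap₂, Measure.restrict_apply' measurableSet_Ioo]
    refine measure_mono_null ?_ hN0
    rintro x ⟨hxM, hxI⟩
    rcases hxM with h | h
    · exact h
    · exact absurd hxI h
  have hae : ∀ᵐ y : ℝ, y ∈ F₂ ⁻¹' M → p₂ y = 0 := by
    have hsm : MeasurableSet (F₂ ⁻¹' M) := hF₂meas hMmeas
    rw [withDensity_apply _ hsm] at hμ2M
    have h0 := (setLIntegral_eq_zero_iff hsm h₂meas.ennreal_ofReal).1 hμ2M
    filter_upwards [h0] with y hy hyM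
    have h := hy hyM
    rw [ENNReal.ofReal_eq_zero] at h
    exact le_antisymm h (h₂nn y)
  filter_upwards [hae] with y hy
  by_cases hyM : F₂ y ∈ M
  · have hp2 : p₂ y = 0 := hy hyM
    simp [hp2]
  · have hvIoo : F₂ y ∈ Set.Ioo (0:ℝ) 1 := by
      by_contra h
      exact hyM (Or.inr h)
    have hvI : ∫⁻ u in Set.Ioo (0:ℝ) 1, ENNReal.ofReal (c u (F₂ y)) = 1 := by
      by_contra h
      exact hyM (Or.inl ⟨hNsub h, hvIoo⟩)
    have hgmeas : Measurable fun t => ENNReal.ofReal (c (F₁ t) (F₂ y) * p₁ t) :=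
      ((hcmeas.comp (hF₁meas.prodMk measurable_const)).mul h₁meas).ennreal_ofReal
    have hsplit : ∀ φ : ℝ, (∑' k : ℤ, ENNReal.ofReal
        (c (F₁ (φ + 2 * π * k)) (F₂ y) * p₁ (φ + 2 * π * k) * p₂ y))
        = (∑' k : ℤ, ENNReal.ofReal
            (c (F₁ (φ + 2 * π * k)) (F₂ y) * p₁ (φ + 2 * π * k))) * ENNReal.ofReal (p₂ y) := by
      intro φ
      rw [← ENNReal.tsum_mul_right]
      exact tsum_congr fun k =>
        ENNReal.ofReal_mul (mul_nonneg (hcnn _ _) (h₁nn _))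
    calc ∫⁻ φ in Set.Ico (0 : ℝ) (2 * π),
        (∑' k : ℤ, ENNReal.ofReal
          (c (F₁ (φ + 2 * π * k)) (F₂ y) * p₁ (φ + 2 * π * k) * p₂ y))
        = ∫⁻ φ in Set.Ico (0 : ℝ) (2 * π),
            (∑' k : ℤ, ENNReal.ofReal
              (c (F₁ (φ + 2 * π * k)) (F₂ y) * p₁ (φ + 2 * π * k))) * ENNReal.ofReal (p₂ y) :=
          lintegral_congr fun φ => hsplit φ
      _ = (∫⁻ φ in Set.Ico (0 : ℝ) (2 * π),
            ∑' k : ℤ, ENNReal.ofReal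
              (c (F₁ (φ + 2 * π * k)) (F₂ y) * p₁ (φ + 2 * π * k))) * ENNReal.ofReal (p₂ y) :=
          lintegral_mul_const _
            (Measurable.ennreal_tsum fun k => hgmeas.comp (measurable_add_const _))
      _ = (∫⁻ x, ENNReal.ofReal (c (F₁ x) (F₂ y) * p₁ x)) * ENNReal.ofReal (p₂ y) := by
          rw [PWAux.lintegral_Ico_wrap (2 * π) Real.two_pi_pos _ hgmeas]
      _ = (∫⁻ x, (fun u => ENNReal.ofReal (c u (F₂ y))) (F₁ x) * ENNReal.ofReal (p₁ x))
            * ENNReal.ofReal (p₂ y) := by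
          congr 1
          exact lintegral_congr fun x => ENNReal.ofReal_mul (hcnn _ _)
      _ = (∫⁻ u in Set.Ioo (0:ℝ) 1, ENNReal.ofReal (c u (F₂ y))) * ENNReal.ofReal (p₂ y) := by
          rw [PWAux.lintegral_comp_cdf h₁meas hF₁meas hmap₁
            (fun u => ENNReal.ofReal (c u (F₂ y)))
            (Measurable.ennreal_ofReal
              (show Measurable fun u => c u (F₂ y) from
                hcmeas.comp (measurable_id.prodMk measurable_const)))]
      _ = 1 * ENNReal.ofReal (p₂ y) := by rw [hvI]
      _ = ENNReal.ofReal (p₂ y) := one_mul _
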